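/- Transported-mass decomposition: with π_{ψ',ψ}(θ) = π(G_{ψ',ψ}^{-1}(θ)) · |det D(G_{ψ',ψ}^{-1})(θ)| · p(ψ',ψ | G_{ψ',ψ}^{-1}(θ)), where G_{ψ',ψ} = H_{ψ'} ∘ F_ψ with F_ψ(θ) = S_ψ^{-1}(θ - μ_ψ), H_{ψ'}(θ*) = S_{ψ'}θ* + μ_{ψ'}, and p(ψ',ψ|ξ) = ϖ(ψ|ξ)·ν(ψ'|F_ψ(ξ)), it holds that π(θ) = Σ_{ψ=1}^K Σ_{ψ'=1}^K π_{ψ',ψ}(θ) for all θ. -/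

import Mathlib

open MeasureTheory Matrix Real

/-- Transported-mass decomposition: with
`π_{ψ',ψ}(θ) = π(G_{ψ',ψ}⁻¹(θ)) · |det D(G_{ψ',ψ}⁻¹)(θ)| · p(ψ',ψ | G_{ψ',ψ}⁻¹(θ))`,
where `G_{ψ',ψ} = H_{ψ'} ∘ F_ψ`, `F_ψ(θ) = S_ψ⁻¹(θ − μ_ψ)`, `H_{ψ'}(θ*) = S_{ψ'}θ* + μ_{ψ'}`,
`p(ψ',ψ|ξ) = ϖ(ψ|ξ)·ν(ψ'|F_ψ(ξ))`, and
`ν(ψ'|θ*) ∝ ϖ(ψ'|H_{ψ'}(θ*)) q(H_{ψ'}(θ*)) |det S_{ψ'}|` (normalised over `ψ'`),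
it holds that `π(θ) = ∑_ψ ∑_{ψ'} π_{ψ',ψ}(θ)` for all `θ`.  The Jacobian of
`G_{ψ',ψ}⁻¹` is `|det S_ψ|/|det S_{ψ'}|`. -/
theorem warpU_transported_mass_decomposition
    (d K : ℕ) (hd : 0 < d) (hK : 0 < K)
    (w : Fin K → ℝ) (hw : ∀ k, 0 ≤ w k) (hwsum : ∑ k, w k = 1)
    (μv : Fin K → (Fin d → ℝ))
    (S : Fin K → Matrix (Fin d) (Fin d) ℝ) (hS : ∀ k, IsUnit (S k).det)
    (φ : (Fin d → ℝ) → ℝ)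
    (hφ : φ = fun x => (2 * π) ^ (-(d : ℝ) / 2) * Real.exp (-(∑ i, x i ^ 2) / 2))
    (φcomp : Fin K → (Fin d → ℝ) → ℝ)
    (hφcomp : φcomp = fun k θ => w k * |((S k)⁻¹).det| * φ ((S k)⁻¹.mulVec (θ - μv k)))
    (φmix : (Fin d → ℝ) → ℝ) (hφmix : φmix = fun θ => ∑ k, φcomp k θ)
    (hφmixpos : ∀ θ, 0 < φmix θ)
    (ϖ : Fin K → (Fin d → ℝ) → ℝ) (hϖ : ϖ = fun k θ => φcomp k θ / φmix θ)
    (q : (Fin d → ℝ) → ℝ) (hq : ∀ θ, 0 ≤ q θ) (hqi : Integrable q volume)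
    (c : ℝ) (hc : c = ∫ θ, q θ) (hcpos : 0 < c)
    (πf : (Fin d → ℝ) → ℝ) (hπf : πf = fun θ => q θ / c)
    (F H : Fin K → (Fin d → ℝ) → (Fin d → ℝ))
    (hF : F = fun k θ => (S k)⁻¹.mulVec (θ - μv k))
    (hH : H = fun k θs => (S k).mulVec θs + μv k)
    (ν : Fin K → (Fin d → ℝ) → ℝ)
    (hν : ν = fun k θs =>
      (ϖ k (H k θs) * q (H k θs) * |(S k).det|) /
        (∑ j, ϖ j (H j θs) * q (H j θs) * |(S j).det|))
    (Ginv : Fin K → Fin K → (Fin d → ℝ) → (Fin d → ℝ))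
    (hGinv : Ginv = fun ψ' ψ θ => H ψ (F ψ' θ)) :
    ∀ θ, πf θ = ∑ ψ, ∑ ψ',
        πf (Ginv ψ' ψ θ) * (|(S ψ).det| / |(S ψ').det|) *
          (ϖ ψ (Ginv ψ' ψ θ) * ν ψ' (F ψ (Ginv ψ' ψ θ))) := by

  intro θ
  have hdet : ∀ k, 0 < |(S k).det| := fun k => abs_pos.mpr ((hS k).ne_zero)
  have hFH : ∀ k x, F k (H k x) = x := by
    intro k x
    simp [hF, hH, Matrix.mulVec_mulVec, Matrix.nonsing_inv_mul _ (hS k)]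
  have hHF : ∀ k x, H k (F k x) = x := by
    intro k x
    simp [hF, hH, Matrix.mulVec_mulVec, Matrix.mul_nonsing_inv _ (hS k)]
  have hϖn : ∀ k t, 0 ≤ ϖ k t := by
    intro k t
    rw [hϖ]
    refine div_nonneg ?_ (hφmixpos t).le
    rw [hφcomp]
    exact mul_nonneg (mul_nonneg (hw k) (abs_nonneg _)) (by rw [hφ]; positivity)
  have hϖsum : ∑ k, ϖ k θ = 1 := by
    rw [hϖ]
    simp only
    rw [← Finset.sum_div, ← congrFun hφmix θ]
    exact div_self (hφmixpos θ).ne'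
  rw [Finset.sum_comm]
  have key : ∀ ψ' : Fin K, (∑ ψ, πf (Ginv ψ' ψ θ) * (|(S ψ).det| / |(S ψ').det|) *
          (ϖ ψ (Ginv ψ' ψ θ) * ν ψ' (F ψ (Ginv ψ' ψ θ)))) = ϖ ψ' θ * πf θ := by
    intro ψ'
    have hGi : ∀ ψ : Fin K, Ginv ψ' ψ θ = H ψ (F ψ' θ) := by
      intro ψ; rw [hGinv]
    have hFGi : ∀ ψ : Fin K, F ψ (Ginv ψ' ψ θ) = F ψ' θ := by
      intro ψ; rw [hGi, hFH]
    have hν' : ν ψ' (F ψ' θ) = ϖ ψ' θ * q θ * |(S ψ').det| /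
        (∑ j, ϖ j (H j (F ψ' θ)) * q (H j (F ψ' θ)) * |(S j).det|) := by
      rw [hν]
      simp only
      rw [hHF ψ' θ]
    set D := ∑ j, ϖ j (H j (F ψ' θ)) * q (H j (F ψ' θ)) * |(S j).det| with hD
    by_cases hD0 : D = 0
    · have hzero : ∀ j : Fin K, ϖ j (H j (F ψ' θ)) * q (H j (F ψ' θ)) * |(S j).det| = 0 := by
        have := (Finset.sum_eq_zero_iff_of_nonneg (fun j _ =>
          mul_nonneg (mul_nonneg (hϖn _ _) (hq _)) (abs_nonneg _))).mp hD0
        exact fun j => this j (Finset.mem_univ j)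
      have h1 : ϖ ψ' θ * q θ = 0 := by
        have := hzero ψ'
        rw [hHF ψ' θ] at this
        rcases mul_eq_zero.mp this with h | h
        · exact h
        · exact absurd h (hdet ψ').ne'
      have hνz : ν ψ' (F ψ' θ) = 0 := by rw [hν', hD0, div_zero]
      rw [Finset.sum_eq_zero (fun ψ _ => by rw [hFGi, hνz]; ring)]
      rw [hπf]
      simp only
      rw [mul_div_assoc] at *
      rw [← mul_div_assoc, h1, zero_div]
    · have hterm : ∀ ψ : Fin K, πf (Ginv ψ' ψ θ) * (|(S ψ).det| / |(S ψ').det|) *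
          (ϖ ψ (Ginv ψ' ψ θ) * ν ψ' (F ψ (Ginv ψ' ψ θ))) =
          (ϖ ψ' θ * q θ / (c * D)) * (ϖ ψ (H ψ (F ψ' θ)) * q (H ψ (F ψ' θ)) * |(S ψ).det|) := by
        intro ψ
        have e1 : |(S ψ').det| ≠ 0 := (hdet ψ').ne'
        have e2 : c ≠ 0 := hcpos.ne'
        rw [hFGi, hν', hGi, hπf]
        simp only
        field_simp
      rw [Finset.sum_congr rfl (fun ψ _ => hterm ψ), ← Finset.mul_sum, ← hD, hπf]
      simp only
      have e2 : c ≠ 0 := hcpos.ne'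
      field_simp
  rw [Finset.sum_congr rfl (fun ψ' _ => key ψ'), ← Finset.sum_mul, hϖsum, one_mul]
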